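/- Let γ > 1, let t ≥ 1, let d_0, d_1, …, d_t be positive natural numbers, and for each j ∈ {1,…,t} let M_j be a real d_{j-1}×d_j LRP-γ attribution matrix built from activations y^{(j)} : Fin d_j → Fin d_{j-1} → ℝ via (M_j)_{bu} = (y^{(j)}_u(b) + γ·max(y^{(j)}_u(b),0)) / (∑_{b'} (y^{(j)}_u(b') + γ·max(y^{(j)}_u(b'),0))), where every column u of every layer j satisfies ∑_b max(y^{(j)}_u(b),0) > 0 and γ^{-1/2}·∑_b max(−y^{(j)}_u(b),0) < ∑_b max(y^{(j)}_u(b),0). Let q ∈ ℝ^{d_t} satisfy q_u ≥ 0 for all u and ∑_u q_u = 1, and set w = M_1 · M_2 · ⋯ · M_t · q ∈ ℝ^{d_0}. Then, with b(γ) = max( 1/(γ^{1/2}−1), (1+γ)/(1+γ−γ^{1/2}) ), one has ∑_{i : w_i > 0} w_i ≤ 2^{t-1}·((1+γ)/(1+γ−γ^{1/2}))·b(γ)^{t-1} and ∑_{i : w_i < 0} w_i ≥ −2^{t-1}·(1/(γ^{1/2}−1))·b(γ)^{t-1}. -/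

import Mathlib

set_option maxHeartbeats 1000000


open Matrix Finset

/-- The chained matrix product `M 0 * M 1 * ⋯ * M (n-1)` of matrices
`M l : Matrix (Fin (d l)) (Fin (d (l+1))) ℝ`. -/
noncomputable def chainProd (d : ℕ → ℕ)
    (M : ∀ l : ℕ, Matrix (Fin (d l)) (Fin (d (l + 1))) ℝ) :
    ∀ n : ℕ, Matrix (Fin (d 0)) (Fin (d n)) ℝ
  | 0 => 1
  | n + 1 => chainProd d M n * M n

private lemma max_mul_decomp (a b : ℝ) :
    max (a * b) 0 = max a 0 * max b 0 + max (-a) 0 * max (-b) 0 := by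
  simp only [max_def]
  split_ifs <;> nlinarith

private lemma num_pos_part (γ yv : ℝ) (hγ : 0 ≤ γ) :
    max (yv + γ * max yv 0) 0 = (1 + γ) * max yv 0 := by
  simp only [max_def]
  split_ifs <;> nlinarith

private lemma num_neg_part (γ yv : ℝ) (hγ : 0 ≤ γ) :
    max (-(yv + γ * max yv 0)) 0 = max (-yv) 0 := by
  simp only [max_def]
  split_ifs <;> nlinarith

private lemma split_y (γ x : ℝ) :
    x + γ * max x 0 = (1 + γ) * max x 0 - max (-x) 0 := by
  simp only [max_def]
  split_ifs <;> nlinarith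

/-- Sequential bound for LRP-γ: propagating simplex weights `q` through `t` LRP-γ layers,
all of whose columns satisfy the γ-condition, the attribution map `w = M_1 ⋯ M_t q`
satisfies, with `b(γ) = max(1/(√γ−1), (1+γ)/(1+γ−√γ))`:
`∑_{w_i>0} w_i ≤ 2^{t-1}·((1+γ)/(1+γ−√γ))·b(γ)^{t-1}` and
`∑_{w_i<0} w_i ≥ −2^{t-1}·(1/(√γ−1))·b(γ)^{t-1}`. -/
theorem lrp_gamma_sequential_bound
    (γ : ℝ) (hγ : 1 < γ) (t : ℕ) (ht : 1 ≤ t)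
    (d : ℕ → ℕ) (hd : ∀ j, j ≤ t → 0 < d j)
    (y : ∀ j : ℕ, Fin (d (j + 1)) → Fin (d j) → ℝ)
    (hy : ∀ j, j < t → ∀ u, (0 < ∑ b, max (y j u b) 0) ∧
      (Real.sqrt γ)⁻¹ * ∑ b, max (-(y j u b)) 0 < ∑ b, max (y j u b) 0)
    (M : ∀ j : ℕ, Matrix (Fin (d j)) (Fin (d (j + 1))) ℝ)
    (hMdef : ∀ j, ∀ (b : Fin (d j)) (u : Fin (d (j + 1))), M j b u =
      (y j u b + γ * max (y j u b) 0) / ∑ b', (y j u b' + γ * max (y j u b') 0))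
    (q : Fin (d t) → ℝ) (hq : ∀ u, 0 ≤ q u) (hqs : ∑ u, q u = 1)
    (w : Fin (d 0) → ℝ) (hw : w = (chainProd d M t) *ᵥ q)
    (bγ : ℝ)
    (hbγ : bγ = max (1 / (Real.sqrt γ - 1)) ((1 + γ) / (1 + γ - Real.sqrt γ))) :
    (∑ i ∈ univ.filter (fun i => 0 < w i), w i) ≤
        2 ^ (t - 1) * ((1 + γ) / (1 + γ - Real.sqrt γ)) * bγ ^ (t - 1) ∧
      (∑ i ∈ univ.filter (fun i => w i < 0), w i) ≥
        -(2 ^ (t - 1) * (1 / (Real.sqrt γ - 1)) * bγ ^ (t - 1)) := by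
  have hγ0 : (0:ℝ) ≤ γ := by linarith
  set s := Real.sqrt γ with hsdef
  have hss : s * s = γ := Real.mul_self_sqrt hγ0
  have hs0 : 0 ≤ s := Real.sqrt_nonneg γ
  have hs1 : 1 < s := by nlinarith
  have hE : 0 < 1 + γ - s := by nlinarith
  set β := s / (1 + γ - s) with hβdef
  set cp := (1 + γ) / (1 + γ - s) with hcpdef
  set cn := 1 / (s - 1) with hcndef
  have hβ0 : 0 ≤ β := div_nonneg (by linarith) hE.le
  have hcp1β : cp = 1 + β := by
    rw [hcpdef, hβdef]; field_simp; ring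
  have hβcp : β ≤ cp := by rw [hcp1β]; linarith
  have hcp0 : 0 ≤ cp := by linarith
  have hβcn : β ≤ cn := by
    rw [hβdef, hcndef, div_le_div_iff₀ hE (by linarith : (0:ℝ) < s - 1)]
    nlinarith
  have hcpb : cp ≤ bγ := by rw [hbγ]; exact le_max_right _ _
  have hcnb : cn ≤ bγ := by rw [hbγ]; exact le_max_left _ _
  have hb0 : 0 ≤ bγ := le_trans hcp0 hcpb
  -- column bounds
  have hcol : ∀ j, j < t → ∀ u : Fin (d (j + 1)),
      (∑ b, max (M j b u) 0) ≤ cp ∧ (∑ b, max (-(M j b u)) 0) ≤ β := by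
    intro j hj u
    obtain ⟨hP, hN⟩ := hy j hj u
    set P := ∑ b, max (y j u b) 0 with hPdef
    set N := ∑ b, max (-(y j u b)) 0 with hNdef
    have hN0 : 0 ≤ N := sum_nonneg fun _ _ => le_max_right _ _
    have hNs : N < s * P := by
      have : s * (s⁻¹ * N) < s * P := mul_lt_mul_of_pos_left hN (by linarith)
      rwa [← mul_assoc, mul_inv_cancel₀ (by linarith : s ≠ 0), one_mul] at this
    set D := ∑ b', (y j u b' + γ * max (y j u b') 0) with hDdef
    have hDsplit : D = (1 + γ) * P - N := by
      rw [hDdef, hPdef, hNdef, mul_sum, ← Finset.sum_sub_distrib]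
      exact sum_congr rfl fun b _ => split_y γ (y j u b)
    have hD : (1 + γ - s) * P ≤ D := by rw [hDsplit]; nlinarith
    have hD0 : 0 < D := lt_of_lt_of_le (mul_pos hE hP) hD
    constructor
    · have h1 : ∀ b : Fin (d j), max (M j b u) 0 = (1 + γ) * max (y j u b) 0 / D := by
        intro b
        have e1 : max ((y j u b + γ * max (y j u b) 0) / D) 0
            = max (y j u b + γ * max (y j u b) 0) 0 / D := by
          rw [← max_div_div_right hD0.le, zero_div]
        rw [hMdef, ← hDdef, e1, num_pos_part γ _ hγ0]
      rw [Finset.sum_congr rfl fun b _ => h1 b, ← Finset.sum_div, ← mul_sum, ← hPdef,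
        hcpdef, div_le_div_iff₀ hD0 hE]
      nlinarith
    · have h1 : ∀ b : Fin (d j), max (-(M j b u)) 0 = max (-(y j u b)) 0 / D := by
        intro b
        have e1 : max (-(y j u b + γ * max (y j u b) 0) / D) 0
            = max (-(y j u b + γ * max (y j u b) 0)) 0 / D := by
          rw [← max_div_div_right hD0.le, zero_div]
        rw [hMdef, ← hDdef, ← neg_div, e1, num_neg_part γ _ hγ0]
      rw [Finset.sum_congr rfl fun b _ => h1 b, ← Finset.sum_div, ← hNdef,
        hβdef, div_le_div_iff₀ hD0 hE]
      nlinarith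
  -- one-layer propagation
  have hstep : ∀ j, j < t → ∀ v : Fin (d (j + 1)) → ℝ,
      (∑ i, max ((M j *ᵥ v) i) 0) ≤
        cp * (∑ u, max (v u) 0) + β * (∑ u, max (-(v u)) 0) := by
    intro j hj v
    have h1 : ∀ i, max ((M j *ᵥ v) i) 0 ≤ ∑ u, max (M j i u * v u) 0 := by
      intro i
      apply max_le
      · calc (M j *ᵥ v) i = ∑ u, M j i u * v u := by
              simp [Matrix.mulVec, dotProduct]
          _ ≤ ∑ u, max (M j i u * v u) 0 := sum_le_sum fun u _ => le_max_left _ _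
      · exact sum_nonneg fun u _ => le_max_right _ _
    calc ∑ i, max ((M j *ᵥ v) i) 0
        ≤ ∑ i, ∑ u, max (M j i u * v u) 0 := sum_le_sum fun i _ => h1 i
      _ = ∑ u, ∑ i, max (M j i u * v u) 0 := Finset.sum_comm
      _ = ∑ u, ((∑ i, max (M j i u) 0) * max (v u) 0
            + (∑ i, max (-(M j i u)) 0) * max (-(v u)) 0) := by
          refine sum_congr rfl fun u _ => ?_
          simp_rw [max_mul_decomp, Finset.sum_add_distrib, ← Finset.sum_mul]
      _ ≤ ∑ u, (cp * max (v u) 0 + β * max (-(v u)) 0) := by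
          refine sum_le_sum fun u _ => add_le_add ?_ ?_
          · exact mul_le_mul_of_nonneg_right (hcol j hj u).1 (le_max_right _ _)
          · exact mul_le_mul_of_nonneg_right (hcol j hj u).2 (le_max_right _ _)
      _ = cp * (∑ u, max (v u) 0) + β * (∑ u, max (-(v u)) 0) := by
          rw [Finset.sum_add_distrib, mul_sum, mul_sum]
  have hstepneg : ∀ j, j < t → ∀ v : Fin (d (j + 1)) → ℝ,
      (∑ i, max (-((M j *ᵥ v) i)) 0) ≤
        β * (∑ u, max (v u) 0) + cp * (∑ u, max (-(v u)) 0) := by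
    intro j hj v
    have h := hstep j hj (-v)
    simp only [Matrix.mulVec_neg, Pi.neg_apply, neg_neg] at h
    linarith
  -- chain propagation
  have hchain : ∀ n, n + 1 ≤ t → ∀ v : Fin (d (n + 1)) → ℝ,
      (∑ i, max ((chainProd d M (n + 1) *ᵥ v) i) 0) ≤
        (2 * bγ) ^ n * (cp * (∑ u, max (v u) 0) + β * (∑ u, max (-(v u)) 0)) := by
    intro n
    induction n with
    | zero =>
      intro h v
      have h1 : chainProd d M (0 + 1) = M 0 := by
        simp only [chainProd]
        exact Matrix.one_mul _
      rw [h1, pow_zero, one_mul]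
      exact hstep 0 h v
    | succ n ih =>
      intro h v
      have h' : n + 1 ≤ t := by omega
      have hlt : n + 1 < t := by omega
      have hMv : chainProd d M (n + 1 + 1) *ᵥ v
          = chainProd d M (n + 1) *ᵥ (M (n + 1) *ᵥ v) := by
        conv_lhs => rw [chainProd]
        rw [← Matrix.mulVec_mulVec]
      rw [hMv]
      have h2 := ih h' (M (n + 1) *ᵥ v)
      have hp := hstep (n + 1) hlt v
      have hn := hstepneg (n + 1) hlt v
      set P := ∑ u, max (v u) 0 with hP
      set N := ∑ u, max (-(v u)) 0 with hN
      have hPn : 0 ≤ P := sum_nonneg fun _ _ => le_max_right _ _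
      have hNn : 0 ≤ N := sum_nonneg fun _ _ => le_max_right _ _
      set P1 := ∑ u, max ((M (n + 1) *ᵥ v) u) 0 with hP1
      set N1 := ∑ u, max (-((M (n + 1) *ᵥ v) u)) 0 with hN1
      have hX : (0:ℝ) ≤ (2 * bγ) ^ n := pow_nonneg (by linarith) n
      calc ∑ i, max ((chainProd d M (n + 1) *ᵥ (M (n + 1) *ᵥ v)) i) 0
          ≤ (2 * bγ) ^ n * (cp * P1 + β * N1) := h2
        _ ≤ (2 * bγ) ^ n * (cp * (cp * P + β * N) + β * (β * P + cp * N)) := by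
            refine mul_le_mul_of_nonneg_left ?_ hX
            exact add_le_add (mul_le_mul_of_nonneg_left hp hcp0)
              (mul_le_mul_of_nonneg_left hn hβ0)
        _ ≤ (2 * bγ) ^ (n + 1) * (cp * P + β * N) := by
            rw [pow_succ, mul_assoc]
            refine mul_le_mul_of_nonneg_left ?_ hX
            have k1 : cp * cp + β * β ≤ 2 * bγ * cp := by
              nlinarith [mul_le_mul hβcp hβcp hβ0 hcp0, mul_le_mul_of_nonneg_right hcpb hcp0]
            have k2 : cp * β ≤ bγ * β := mul_le_mul_of_nonneg_right hcpb hβ0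
            nlinarith [mul_le_mul_of_nonneg_right k1 hPn, mul_le_mul_of_nonneg_right k2 hNn]
  obtain ⟨t', rfl⟩ : ∃ t', t = t' + 1 := ⟨t - 1, by omega⟩
  have hq1 : (∑ u, max (q u) 0) = 1 := by
    rw [← hqs]; exact sum_congr rfl fun u _ => max_eq_left (hq u)
  have hq0 : (∑ u, max (-(q u)) 0) = 0 :=
    sum_eq_zero fun u _ => max_eq_right (neg_nonpos.2 (hq u))
  have hpos := hchain t' le_rfl q
  rw [hq1, hq0, ← hw] at hpos
  have hnegq := hchain t' le_rfl (-q)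
  have hq1' : (∑ u, max ((-q) u) 0) = 0 :=
    sum_eq_zero fun u _ => max_eq_right (by simpa using neg_nonpos.2 (hq u))
  have hq0' : (∑ u, max (-((-q) u)) 0) = 1 := by
    rw [← hqs]
    exact sum_congr rfl fun u _ => by simpa using max_eq_left (hq u)
  rw [hq1', hq0', Matrix.mulVec_neg, ← hw] at hnegq
  simp only [Pi.neg_apply] at hnegq
  have hposeq : (∑ i ∈ univ.filter (fun i => 0 < w i), w i) = ∑ i, max (w i) 0 := by
    rw [Finset.sum_filter]
    refine sum_congr rfl fun i _ => ?_
    split_ifs with h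
    · exact (max_eq_left h.le).symm
    · exact (max_eq_right (not_lt.1 h)).symm
  have hnegeq : (∑ i ∈ univ.filter (fun i => w i < 0), w i)
      = -(∑ i, max (-(w i)) 0) := by
    rw [Finset.sum_filter, ← Finset.sum_neg_distrib]
    refine sum_congr rfl fun i _ => ?_
    split_ifs with h
    · rw [max_eq_left (by linarith)]; ring
    · rw [max_eq_right (by linarith [not_lt.1 h])]; ring
  have hts : t' + 1 - 1 = t' := rfl
  have hmp : (2 * bγ) ^ t' = 2 ^ t' * bγ ^ t' := mul_pow 2 bγ t'
  constructor
  · rw [hposeq, hts]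
    calc ∑ i, max (w i) 0 ≤ (2 * bγ) ^ t' * (cp * 1 + β * 0) := hpos
      _ = 2 ^ t' * cp * bγ ^ t' := by rw [hmp]; ring
      _ = 2 ^ t' * ((1 + γ) / (1 + γ - s)) * bγ ^ t' := by rw [hcpdef]
  · rw [hnegeq, hts, ge_iff_le, neg_le_neg_iff]
    calc ∑ i, max (-(w i)) 0 ≤ (2 * bγ) ^ t' * (cp * 0 + β * 1) := hnegq
      _ = (2 * bγ) ^ t' * β := by ring
      _ ≤ (2 * bγ) ^ t' * cn := mul_le_mul_of_nonneg_left hβcn (pow_nonneg (by linarith) t')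
      _ = 2 ^ t' * (1 / (s - 1)) * bγ ^ t' := by rw [hmp, hcndef]; ring
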